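/- (Integrated MSE convergence of the field estimate.) In the binary-sensing model, if the truncation sequence m(n) satisfies m(n) → ∞ as n → ∞, and (1/n) Σ_{j=0}^{m(n)−1} ∫_D |φ_j(x)|² / p_X(x) dx → 0 as n → ∞, then for every measurable f : D → [−a, a] and every zero-mean noise distribution supported in [−b, b], the integrated mean squared error converges: E[‖f − f̂_{n,m(n)}‖²] → 0 as n → ∞. -/

import Mathlib

open MeasureTheory ProbabilityTheory Filter
open scoped ENNReal Topology

noncomputable section

/-- Sign function: `+1` if `u > 0` and `-1` otherwise. -/
def sgn' (u : ℝ) : ℝ := if 0 < u then 1 else -1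

/-- Binary-quantized observation of sensor `i`: `B i = sgn (f (X i) + Z i - T i)`. -/
def obsB {E Ω : Type*} (f : E → ℝ) (X : ℕ → Ω → E) (Z T : ℕ → Ω → ℝ)
    (i : ℕ) (ω : Ω) : ℝ :=
  sgn' (f (X i ω) + Z i ω - T i ω)

/-- Estimate of the `j`-th coefficient from the first `n` sensors:
`α̂_j = (c/n) ∑_{i<n} (φ_j(X_i))^* / p_X(X_i) * B_i`. -/
def alphaHat {E Ω : Type*} (c : ℝ) (pX : E → ℝ) (φ : ℕ → E → ℂ) (f : E → ℝ)
    (X : ℕ → Ω → E) (Z T : ℕ → Ω → ℝ) (n j : ℕ) (ω : Ω) : ℂ :=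
  ((c : ℂ) / (n : ℂ)) * ∑ i ∈ Finset.range n,
    (starRingEnd ℂ) (φ j (X i ω)) / (pX (X i ω) : ℂ) * (obsB f X Z T i ω : ℂ)

/-- The `j`-th coefficient of the field `f`: `α_j = ⟨f, φ_j⟩ = ∫_D f (φ_j)^*`. -/
def coeff {E : Type*} [MeasureSpace E] (D : Set E) (f : E → ℝ) (φ : ℕ → E → ℂ)
    (j : ℕ) : ℂ :=
  ∫ x in D, (f x : ℂ) * (starRingEnd ℂ) (φ j x)

/-- The `m`-term field estimate `f̂_{n,m} = ∑_{j<m} α̂_j φ_j`. -/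
def fieldEst {E Ω : Type*} (c : ℝ) (pX : E → ℝ) (φ : ℕ → E → ℂ) (f : E → ℝ)
    (X : ℕ → Ω → E) (Z T : ℕ → Ω → ℝ) (n m : ℕ) (x : E) (ω : Ω) : ℂ :=
  ∑ j ∈ Finset.range m, alphaHat c pX φ f X Z T n j ω * φ j x

/-- The `m`-term approximation `f_m = ∑_{j<m} α_j φ_j`. -/
def mApprox {E : Type*} [MeasureSpace E] (D : Set E) (f : E → ℝ) (φ : ℕ → E → ℂ)
    (m : ℕ) (x : E) : ℂ :=
  ∑ j ∈ Finset.range m, coeff D f φ j * φ j x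

/-- The integrated mean squared error `E[‖f - f̂_{n,m}‖²]`. -/
def intMSE {E Ω : Type*} [MeasureSpace E] [MeasurableSpace Ω] (P : Measure Ω)
    (D : Set E) (c : ℝ) (pX : E → ℝ) (φ : ℕ → E → ℂ) (f : E → ℝ)
    (X : ℕ → Ω → E) (Z T : ℕ → Ω → ℝ) (n m : ℕ) : ℝ :=
  ∫ ω, (∫ x in D, ‖(f x : ℂ) - fieldEst c pX φ f X Z T n m x ω‖ ^ 2) ∂P

/-- The `m`-term approximation error `ε[f,m] = ∑_{j≥m} |α_j|²`. -/
def tailErr {E : Type*} [MeasureSpace E] (D : Set E) (f : E → ℝ) (φ : ℕ → E → ℂ)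
    (m : ℕ) : ℝ :=
  ∑' j : ℕ, ‖coeff D f φ (m + j)‖ ^ 2

/-- The deployment distribution: density `p_X` (w.r.t. Lebesgue measure) on `D`. -/
def deployLaw {E : Type*} [MeasureSpace E] (D : Set E) (pX : E → ℝ) : Measure E :=
  (volume.restrict D).withDensity fun x => ENNReal.ofReal (pX x)

/-- The threshold distribution: uniform on `[-c, c]`. -/
def threshLaw (c : ℝ) : Measure ℝ :=
  (ENNReal.ofReal (1 / (2 * c))) • volume.restrict (Set.Icc (-c) c)

end



lemma norm_sub_sq_complex (u v : ℂ) :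
    ‖u - v‖^2 = ‖u‖^2 - 2*(u * (starRingEnd ℂ) v).re + ‖v‖^2 := by
  simp only [Complex.sq_norm, Complex.normSq_apply, Complex.sub_re,
    Complex.sub_im, Complex.mul_re, Complex.conj_re, Complex.conj_im]
  ring

lemma memLp_conj {α : Type*} [MeasurableSpace α] {μ : Measure α} {g : α → ℂ} {p : ℝ≥0∞}
    (hg : MemLp g p μ) : MemLp (fun x => (starRingEnd ℂ) (g x)) p μ :=
  hg.of_le (RCLike.continuous_conj.comp_aestronglyMeasurable hg.1)
    (Filter.Eventually.of_forall fun x => by simp)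

lemma integrable_mul_L2 {α : Type*} [MeasurableSpace α] {μ : Measure α} {g h : α → ℂ}
    (hg : MemLp g 2 μ) (hh : MemLp h 2 μ) :
    Integrable (fun x => g x * h x) μ := by
  have := hh.smul (φ := g) hg (r := 1)
  rw [memLp_one_iff_integrable] at this
  exact this

lemma measurable_sgn' : Measurable sgn' := by
  unfold sgn'
  exact Measurable.ite (measurableSet_lt measurable_const measurable_id) measurable_const
    measurable_const

lemma abs_sgn' (u : ℝ) : |sgn' u| = 1 := by
  unfold sgn'; split <;> norm_num
lemma expansion_lemma {α : Type*} [MeasurableSpace α] {μ : Measure α}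
    {F : α → ℂ} {φ : ℕ → α → ℂ}
    (hF : MemLp F 2 μ) (hφ : ∀ j, MemLp (φ j) 2 μ)
    (hON : ∀ j k, (∫ x, φ j x * (starRingEnd ℂ) (φ k x) ∂μ) = if j = k then 1 else 0)
    (β : ℕ → ℂ) (m : ℕ) :
    (∫ x, ‖F x - ∑ j ∈ Finset.range m, β j * φ j x‖^2 ∂μ)
      = (∫ x, ‖F x‖^2 ∂μ)
        - (∑ j ∈ Finset.range m, ‖∫ x, F x * (starRingEnd ℂ) (φ j x) ∂μ‖^2)
        + ∑ j ∈ Finset.range m, ‖β j - ∫ x, F x * (starRingEnd ℂ) (φ j x) ∂μ‖^2 := by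
  set a : ℕ → ℂ := fun j => ∫ x, F x * (starRingEnd ℂ) (φ j x) ∂μ with ha
  set g : α → ℂ := fun x => ∑ j ∈ Finset.range m, β j * φ j x with hgdef
  have hg : MemLp g 2 μ := by
    have h := memLp_finset_sum' (μ := μ) (Finset.range m)
      (fun j (_ : j ∈ Finset.range m) => (hφ j).const_mul (β j))
    have h2 : (∑ i ∈ Finset.range m, fun x => β i * φ i x) = g := by
      funext x; rw [hgdef]; simp
    rwa [h2] at h
  -- integrability facts
  have hF2 : Integrable (fun x => ‖F x‖^2) μ :=
    (memLp_two_iff_integrable_sq_norm hF.1).mp hF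
  have hg2 : Integrable (fun x => ‖g x‖^2) μ :=
    (memLp_two_iff_integrable_sq_norm hg.1).mp hg
  have hFg : Integrable (fun x => F x * (starRingEnd ℂ) (g x)) μ :=
    integrable_mul_L2 hF (memLp_conj hg)
  have hFφ : ∀ j, Integrable (fun x => F x * (starRingEnd ℂ) (φ j x)) μ :=
    fun j => integrable_mul_L2 hF (memLp_conj (hφ j))
  have hφφ : ∀ j k, Integrable (fun x => φ j x * (starRingEnd ℂ) (φ k x)) μ :=
    fun j k => integrable_mul_L2 (hφ j) (memLp_conj (hφ k))
  have hFgre : Integrable (fun x => (F x * (starRingEnd ℂ) (g x)).re) μ := by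
    simpa using hFg.re
  have hre := integral_re hFg
  simp only [RCLike.re_to_complex] at hre
  -- main pointwise identity and split of the integral
  have key : (∫ x, ‖F x - g x‖^2 ∂μ)
      = (∫ x, ‖F x‖^2 ∂μ) - 2 * (∫ x, F x * (starRingEnd ℂ) (g x) ∂μ).re
        + ∫ x, ‖g x‖^2 ∂μ := by
    have h1 : (∫ x, ‖F x - g x‖^2 ∂μ)
        = ∫ x, (‖F x‖^2 - 2*(F x * (starRingEnd ℂ) (g x)).re + ‖g x‖^2) ∂μ :=
      integral_congr_ae (Filter.Eventually.of_forall fun x => norm_sub_sq_complex _ _)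
    have hsub : Integrable (fun x => ‖F x‖^2 - 2*(F x * (starRingEnd ℂ) (g x)).re) μ :=
      hF2.sub (hFgre.const_mul 2)
    have hcm : Integrable (fun x => 2*(F x * (starRingEnd ℂ) (g x)).re) μ :=
      hFgre.const_mul 2
    rw [h1, integral_add hsub hg2, integral_sub hF2 hcm, integral_const_mul, hre]
  -- compute ∫ F conj g
  have hFg_val : (∫ x, F x * (starRingEnd ℂ) (g x) ∂μ)
      = ∑ j ∈ Finset.range m, (starRingEnd ℂ) (β j) * a j := by
    have hpt : ∀ x, F x * (starRingEnd ℂ) (g x)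
        = ∑ j ∈ Finset.range m, (starRingEnd ℂ) (β j) * (F x * (starRingEnd ℂ) (φ j x)) := by
      intro x
      rw [hgdef]
      simp only [map_sum, map_mul, Finset.mul_sum]
      exact Finset.sum_congr rfl fun j _ => by ring
    rw [integral_congr_ae (Filter.Eventually.of_forall hpt),
      integral_finset_sum _ (fun j _ => (hFφ j).const_mul _)]
    exact Finset.sum_congr rfl fun j _ => by rw [integral_const_mul]
  -- compute ∫ ‖g‖²
  have hg_val : (∫ x, ‖g x‖^2 ∂μ) = ∑ j ∈ Finset.range m, ‖β j‖^2 := by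
    have hpt : ∀ x, (‖g x‖^2 : ℝ) = (∑ j ∈ Finset.range m, ∑ k ∈ Finset.range m,
        (β j * (starRingEnd ℂ) (β k)) * (φ j x * (starRingEnd ℂ) (φ k x))).re := by
      intro x
      have h3 : ((∑ j ∈ Finset.range m, ∑ k ∈ Finset.range m,
          (β j * (starRingEnd ℂ) (β k)) * (φ j x * (starRingEnd ℂ) (φ k x))))
          = g x * (starRingEnd ℂ) (g x) := by
        rw [hgdef]
        simp only [map_sum, map_mul, Finset.sum_mul_sum]
        exact Finset.sum_congr rfl fun j _ => Finset.sum_congr rfl fun k _ => by ring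
      rw [h3, Complex.mul_conj]
      simp [Complex.sq_norm]
    rw [integral_congr_ae (Filter.Eventually.of_forall hpt)]
    have hint : ∀ j ∈ Finset.range m, Integrable (fun x => (∑ k ∈ Finset.range m,
        (β j * (starRingEnd ℂ) (β k)) * (φ j x * (starRingEnd ℂ) (φ k x))).re) μ := by
      intro j _
      have := (integrable_finset_sum (μ := μ) (Finset.range m)
        (fun k (_ : k ∈ Finset.range m) => ((hφφ j k).const_mul (β j * (starRingEnd ℂ) (β k))))).re
      simpa using this
    calc (∫ x, (∑ j ∈ Finset.range m, ∑ k ∈ Finset.range m,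
        (β j * (starRingEnd ℂ) (β k)) * (φ j x * (starRingEnd ℂ) (φ k x))).re ∂μ)
        = ∑ j ∈ Finset.range m, ∫ x, (∑ k ∈ Finset.range m,
          (β j * (starRingEnd ℂ) (β k)) * (φ j x * (starRingEnd ℂ) (φ k x))).re ∂μ := by
          rw [← integral_finset_sum _ hint]
          congr 1; funext x; rw [Complex.re_sum]
      _ = ∑ j ∈ Finset.range m, ‖β j‖^2 := by
          refine Finset.sum_congr rfl fun j hj => ?_
          have hintk : Integrable (fun x => (∑ k ∈ Finset.range m,
              (β j * (starRingEnd ℂ) (β k)) * (φ j x * (starRingEnd ℂ) (φ k x)))) μ :=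
            integrable_finset_sum _ (fun k _ => ((hφφ j k).const_mul _))
          have hre2 := integral_re hintk
          simp only [RCLike.re_to_complex] at hre2
          have h4 : (∫ x, (∑ k ∈ Finset.range m,
              (β j * (starRingEnd ℂ) (β k)) * (φ j x * (starRingEnd ℂ) (φ k x))).re ∂μ)
              = (∑ k ∈ Finset.range m, (β j * (starRingEnd ℂ) (β k))
                  * ∫ x, (φ j x * (starRingEnd ℂ) (φ k x)) ∂μ).re := by
            rw [hre2, integral_finset_sum _ (fun k _ => ((hφφ j k).const_mul _))]
            congr 1
            exact Finset.sum_congr rfl fun k _ => integral_const_mul _ _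
          rw [h4, Finset.sum_congr rfl (fun k hk => by rw [hON j k]),
            Finset.sum_eq_single j (fun k _ hkj => by simp [Ne.symm hkj])
              (fun h => absurd hj h)]
          simp [Complex.mul_conj, Complex.sq_norm]
  rw [key, hFg_val, hg_val]
  have hjid : ∀ j, ‖β j‖^2 - 2*((starRingEnd ℂ) (β j) * a j).re
      = ‖β j - a j‖^2 - ‖a j‖^2 := by
    intro j
    rw [norm_sub_sq_complex]
    simp only [Complex.sq_norm, Complex.normSq_apply, Complex.mul_re,
      Complex.conj_re, Complex.conj_im]
    ring
  rw [Complex.re_sum, Finset.mul_sum]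
  have l1 : ∀ (I : ℝ) (u v : ℕ → ℝ), I - (∑ j ∈ Finset.range m, u j)
      + (∑ j ∈ Finset.range m, v j) = I + ∑ j ∈ Finset.range m, (v j - u j) := by
    intro I u v; rw [Finset.sum_sub_distrib]; ring
  rw [l1, l1]
  congr 1
  exact Finset.sum_congr rfl fun j _ => by linarith [hjid j]
lemma threshLaw_prob {c : ℝ} (hc : 0 < c) : IsProbabilityMeasure (threshLaw c) := by
  constructor
  rw [threshLaw, Measure.smul_apply, Measure.restrict_apply MeasurableSet.univ,
    Set.univ_inter, Real.volume_Icc, smul_eq_mul, ← ENNReal.ofReal_mul (by positivity)]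
  rw [show c - -c = 2*c by ring]
  rw [show 1/(2*c) * (2*c) = 1 by field_simp]
  simp

lemma sgn'_integral {c : ℝ} (hc : 0 < c) {s : ℝ} (hs : s ∈ Set.Icc (-c) c) :
    (∫ t, sgn' (s - t) ∂(threshLaw c)) = s / c := by
  have key : (∫ t in Set.Icc (-c) c, sgn' (s - t)) = 2 * s := by
    have hsplit : Set.Icc (-c) c = Set.Ico (-c) s ∪ Set.Icc s c := by
      rw [Set.Ico_union_Icc_eq_Icc hs.1 hs.2]
    have hdisj : Disjoint (Set.Ico (-c) s) (Set.Icc s c) := by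
      apply Set.disjoint_left.mpr
      rintro t ⟨_, h2⟩ ⟨h3, _⟩; exact absurd h3 (not_le.mpr h2)
    rw [hsplit, setIntegral_union hdisj measurableSet_Icc]
    · have e1 : (∫ t in Set.Ico (-c) s, sgn' (s - t)) = ∫ t in Set.Ico (-c) s, (1:ℝ) := by
        apply setIntegral_congr_fun measurableSet_Ico
        intro t ht; simp only [sgn', if_pos (by linarith [ht.2] : (0:ℝ) < s - t)]
      have e2 : (∫ t in Set.Icc s c, sgn' (s - t)) = ∫ t in Set.Icc s c, (-1:ℝ) := by
        apply setIntegral_congr_fun measurableSet_Icc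
        intro t ht; simp only [sgn', if_neg (by push_neg; linarith [ht.1] : ¬ (0:ℝ) < s - t)]
      rw [e1, e2, setIntegral_const, setIntegral_const, Real.volume_real_Ico_of_le (by linarith [hs.1]), Real.volume_real_Icc_of_le (by linarith [hs.2])]
      simp only [smul_eq_mul]
      ring
    · exact (integrable_const (1:ℝ)).mono'
        ((measurable_sgn'.comp (measurable_const.sub measurable_id)).aestronglyMeasurable)
        (Filter.Eventually.of_forall fun t => by rw [Real.norm_eq_abs, abs_sgn'])
    · exact (integrable_const (1:ℝ)).mono'
        ((measurable_sgn'.comp (measurable_const.sub measurable_id)).aestronglyMeasurable)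
        (Filter.Eventually.of_forall fun t => by rw [Real.norm_eq_abs, abs_sgn'])
  rw [threshLaw, integral_smul_measure, key, smul_eq_mul,
    ENNReal.toReal_ofReal (by positivity)]
  field_simp
section Deploy
variable {E : Type*} [MeasureSpace E] {D : Set E} {pX : E → ℝ}

lemma deployLaw_eq : deployLaw D pX
    = (volume.restrict D).withDensity (fun x => ((pX x).toNNReal : ℝ≥0∞)) := rfl

lemma deploy_smul_ae (hDm : MeasurableSet D) (hpos : ∀ x ∈ D, 0 < pX x)
    {G : Type*} [NormedAddCommGroup G] [NormedSpace ℝ G] (g : E → G) :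
    (fun x => (pX x).toNNReal • g x) =ᵐ[volume.restrict D] (fun x => pX x • g x) := by
  filter_upwards [ae_restrict_mem hDm] with x hx
  rw [NNReal.smul_def, Real.coe_toNNReal _ (hpos x hx).le]

lemma deploy_integral (hDm : MeasurableSet D) (hpos : ∀ x ∈ D, 0 < pX x)
    (hpm : Measurable pX) {G : Type*} [NormedAddCommGroup G] [NormedSpace ℝ G] (g : E → G) :
    (∫ x, g x ∂(deployLaw D pX)) = ∫ x in D, pX x • g x := by
  rw [deployLaw_eq, integral_withDensity_eq_integral_smul₀ hpm.real_toNNReal.aemeasurable]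
  exact integral_congr_ae (deploy_smul_ae hDm hpos g)

lemma deploy_integrable_iff (hDm : MeasurableSet D) (hpos : ∀ x ∈ D, 0 < pX x)
    (hpm : Measurable pX) {G : Type*} [NormedAddCommGroup G] [NormedSpace ℝ G] (g : E → G) :
    Integrable g (deployLaw D pX) ↔ Integrable (fun x => pX x • g x) (volume.restrict D) := by
  rw [deployLaw_eq, integrable_withDensity_iff_integrable_smul₀ hpm.real_toNNReal.aemeasurable]
  exact integrable_congr (deploy_smul_ae hDm hpos g)

lemma deploy_prob (hDm : MeasurableSet D) (hpos : ∀ x ∈ D, 0 < pX x)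
    (hone : (∫ x in D, pX x) = 1) : IsProbabilityMeasure (deployLaw D pX) := by
  have hInt : Integrable pX (volume.restrict D) := by
    by_contra h
    rw [integral_undef h] at hone
    norm_num at hone
  have hae : 0 ≤ᵐ[volume.restrict D] pX := by
    filter_upwards [ae_restrict_mem hDm] with x hx using (hpos x hx).le
  constructor
  rw [deployLaw, withDensity_apply _ MeasurableSet.univ, Measure.restrict_univ,
    ← ofReal_integral_eq_lintegral_ofReal hInt hae, hone]
  simp

lemma deploy_ae_mem (hDm : MeasurableSet D) : ∀ᵐ x ∂(deployLaw D pX), x ∈ D := by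
  have h : deployLaw D pX ≪ volume.restrict D := withDensity_absolutelyContinuous _ _
  exact h.ae_le (ae_restrict_mem hDm)
end Deploy
lemma memLp_two_integrable {α : Type*} [MeasurableSpace α] {μ : Measure α}
    [IsFiniteMeasure μ] {h : α → ℂ} (hh : MemLp h 2 μ) : Integrable h μ :=
  memLp_one_iff_integrable.mp (hh.mono_exponent (by norm_num))
set_option maxHeartbeats 2000000 in
/-- **Integrated MSE consistency of the field estimate (Corollary 1).**
If `m(n) → ∞` and `(1/n) ∑_(j<m(n)) ∫_D |φ_j|²/p_X → 0`, then
`E[‖f − f̂_(n,m(n))‖²] → 0`. -/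
theorem stmt6
    {d : ℕ} {D : Set (Fin d → ℝ)} (hDcomp : IsCompact D)
    (hDpos : 0 < volume D) (hDfin : volume D < ⊤)
    {a b c : ℝ} (ha : 0 < a) (hb : 0 < b) (hc : c = a + b)
    {f : (Fin d → ℝ) → ℝ} (hfmeas : Measurable f)
    (hfbd : ∀ x ∈ D, f x ∈ Set.Icc (-a) a)
    {pX : (Fin d → ℝ) → ℝ} (hpXmeas : Measurable pX)
    (hpXpos : ∀ x ∈ D, 0 < pX x) (hpXone : (∫ x in D, pX x) = 1)
    {φ : ℕ → (Fin d → ℝ) → ℂ} (hφmeas : ∀ j, Measurable (φ j))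
    (hφL2 : ∀ j, MemLp (φ j) 2 (volume.restrict D))
    (hON : ∀ j k, (∫ x in D, φ j x * (starRingEnd ℂ) (φ k x)) = if j = k then 1 else 0)
    (hComplete : ∀ g : (Fin d → ℝ) → ℂ, Measurable g → MemLp g 2 (volume.restrict D) →
      (∑' j : ℕ, ‖∫ x in D, g x * (starRingEnd ℂ) (φ j x)‖ ^ 2) = ∫ x in D, ‖g x‖ ^ 2)
    {Ω : Type*} [MeasurableSpace Ω] (P : Measure Ω) [IsProbabilityMeasure P]
    (X : ℕ → Ω → (Fin d → ℝ)) (Z T : ℕ → Ω → ℝ)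
    (hXmeas : ∀ i, Measurable (X i)) (hZmeas : ∀ i, Measurable (Z i))
    (hTmeas : ∀ i, Measurable (T i))
    (μZ : Measure ℝ) [IsProbabilityMeasure μZ]
    (hZmean : (∫ z, z ∂μZ) = 0) (hZsupp : μZ (Set.Icc (-b) b)ᶜ = 0)
    (hlaw : ∀ i, Measure.map (fun ω => (X i ω, Z i ω, T i ω)) P =
      (deployLaw D pX).prod (μZ.prod (threshLaw c)))
    (hiid : iIndepFun (fun i ω => (X i ω, Z i ω, T i ω)) P)
    (hInt : ∀ j, Integrable (fun x => ‖φ j x‖ ^ 2 / pX x) (volume.restrict D))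
    (mfun : ℕ → ℕ) (hm1 : Tendsto mfun atTop atTop)
    (hm2 : Tendsto (fun n : ℕ =>
        (1 / (n : ℝ)) * ∑ j ∈ Finset.range (mfun n), ∫ x in D, ‖φ j x‖ ^ 2 / pX x)
      atTop (𝓝 0)) :
    Tendsto (fun n : ℕ => intMSE P D c pX φ f X Z T n (mfun n)) atTop (𝓝 0) := by
  -- basic setup
  have hc0 : 0 < c := by rw [hc]; positivity
  have hDm : MeasurableSet D := hDcomp.measurableSet
  haveI hνfin : IsFiniteMeasure (volume.restrict D) := ⟨by rwa [Measure.restrict_apply_univ]⟩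
  haveI hdp : IsProbabilityMeasure (deployLaw D pX) := deploy_prob hDm hpXpos hpXone
  haveI htp : IsProbabilityMeasure (threshLaw c) := threshLaw_prob hc0
  set μ : Measure ((Fin d → ℝ) × ℝ × ℝ) := (deployLaw D pX).prod (μZ.prod (threshLaw c))
    with hμdef
  haveI : IsProbabilityMeasure μ := by rw [hμdef]; infer_instance
  set W : ℕ → Ω → (Fin d → ℝ) × ℝ × ℝ := fun i ω => (X i ω, Z i ω, T i ω) with hWdef
  have hWmeas : ∀ i, Measurable (W i) :=
    fun i => (hXmeas i).prodMk ((hZmeas i).prodMk (hTmeas i))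
  have hmap : ∀ i, Measure.map (W i) P = μ := hlaw
  set g : ℕ → (Fin d → ℝ) × ℝ × ℝ → ℂ := fun j w =>
    (c:ℂ) * ((starRingEnd ℂ) (φ j w.1) / (pX w.1 : ℂ)) * ((sgn' (f w.1 + w.2.1 - w.2.2) : ℝ) : ℂ)
    with hgdef
  have hgm : ∀ j, Measurable (g j) := by
    intro j
    apply Measurable.mul
    · apply Measurable.mul measurable_const
      exact (RCLike.continuous_conj.measurable.comp ((hφmeas j).comp measurable_fst)).div
        (Complex.measurable_ofReal.comp (hpXmeas.comp measurable_fst))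
    · exact Complex.measurable_ofReal.comp (measurable_sgn'.comp
        (((hfmeas.comp measurable_fst).add (measurable_fst.comp measurable_snd)).sub
          (measurable_snd.comp measurable_snd)))
  set I : ℕ → ℝ := fun j => ∫ x in D, ‖φ j x‖ ^ 2 / pX x with hIdef
  have hI0 : ∀ j, 0 ≤ I j := by
    intro j
    apply integral_nonneg_of_ae
    filter_upwards [ae_restrict_mem hDm] with x hx
    exact div_nonneg (by positivity) (hpXpos x hx).le
  -- L² membership and integrability of g j
  set G : ℕ → (Fin d → ℝ) → ℂ := fun j x => (c:ℂ) * ((starRingEnd ℂ) (φ j x) / (pX x : ℂ))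
    with hGdef
  have hGm : ∀ j, Measurable (G j) := by
    intro j
    exact measurable_const.mul ((RCLike.continuous_conj.measurable.comp (hφmeas j)).div
      (Complex.measurable_ofReal.comp hpXmeas))
  have hgnorm : ∀ j w, ‖g j w‖ = ‖G j w.1‖ := by
    intro j w
    rw [hgdef, hGdef]
    simp only [norm_mul, Complex.norm_real, Real.norm_eq_abs, abs_sgn', mul_one]
  have hGnormsq : (fun x => pX x • ‖(0:ℝ)‖) = (fun x => pX x • ‖(0:ℝ)‖) := rfl
  have hGsq_ae : ∀ j, (fun x => pX x • ‖G j x‖^2)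
      =ᵐ[volume.restrict D] (fun x => c^2 * (‖φ j x‖^2 / pX x)) := by
    intro j
    filter_upwards [ae_restrict_mem hDm] with x hx
    have hp := hpXpos x hx
    rw [hGdef]
    simp only [smul_eq_mul, norm_mul, norm_div, Complex.norm_real, Real.norm_eq_abs,
      RCLike.norm_conj]
    rw [abs_of_pos hc0, abs_of_pos hp]
    field_simp
  have hGsq_int : ∀ j, Integrable (fun x => ‖G j x‖^2) (deployLaw D pX) := by
    intro j
    rw [deploy_integrable_iff hDm hpXpos hpXmeas]
    exact (((hInt j).const_mul (c^2)).congr (hGsq_ae j).symm)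
  have hGL2 : ∀ j, MemLp (G j) 2 (deployLaw D pX) := by
    intro j
    exact (memLp_two_iff_integrable_sq_norm (hGm j).aestronglyMeasurable).mpr (hGsq_int j)
  have hfst : Measure.map Prod.fst μ = deployLaw D pX := by
    rw [hμdef, Measure.map_fst_prod]
    simp
  have hGfstL2 : ∀ j, MemLp (fun w : (Fin d → ℝ) × ℝ × ℝ => G j w.1) 2 μ := by
    intro j
    have h1 : MemLp (G j) 2 (Measure.map Prod.fst μ) := by rw [hfst]; exact hGL2 j
    exact (memLp_map_measure_iff ((hGm j).aestronglyMeasurable)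
      measurable_fst.aemeasurable).mp h1
  have hgL2 : ∀ j, MemLp (g j) 2 μ := by
    intro j
    exact (hGfstL2 j).of_le ((hgm j).aestronglyMeasurable)
      (Filter.Eventually.of_forall fun w => le_of_eq (hgnorm j w))
  have hgInt : ∀ j, Integrable (g j) μ := fun j => memLp_two_integrable (hgL2 j)
  -- second moment bound
  have hgsq : ∀ j, (∫ w, ‖g j w‖^2 ∂μ) ≤ c^2 * I j := by
    intro j
    apply le_of_eq
    have e1 : (∫ w, ‖g j w‖^2 ∂μ) = ∫ w, ‖G j w.1‖^2 ∂μ :=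
      integral_congr_ae (Filter.Eventually.of_forall fun w => by simp only []; rw [hgnorm j w])
    have e2 : (∫ w, ‖G j w.1‖^2 ∂μ) = ∫ x, ‖G j x‖^2 ∂(deployLaw D pX) := by
      rw [← hfst, integral_map measurable_fst.aemeasurable]
      rw [hfst]
      exact ((hGm j).norm.pow_const 2).aestronglyMeasurable
    rw [e1, e2, deploy_integral hDm hpXpos hpXmeas, integral_congr_ae (hGsq_ae j),
      integral_const_mul]
  -- unbiasedness
  have hae_z : ∀ᵐ z ∂μZ, z ∈ Set.Icc (-b) b := by
    exact ae_iff.mpr hZsupp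
  have hzint : Integrable (fun z : ℝ => z) μZ := by
    apply (integrable_const b).mono' measurable_id.aestronglyMeasurable
    filter_upwards [hae_z] with z hz
    rw [Real.norm_eq_abs, abs_le]
    exact ⟨hz.1, hz.2⟩
  have hinner : ∀ x, x ∈ D → (∫ p : ℝ × ℝ,
      ((sgn' (f x + p.1 - p.2) : ℝ) : ℂ) ∂(μZ.prod (threshLaw c))) = ((f x / c : ℝ) : ℂ) := by
    intro x hx
    have hint : Integrable (fun p : ℝ × ℝ => ((sgn' (f x + p.1 - p.2) : ℝ) : ℂ))
        (μZ.prod (threshLaw c)) := by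
      apply (integrable_const (1:ℝ)).mono'
        (Complex.measurable_ofReal.comp (measurable_sgn'.comp
          ((measurable_const.add measurable_fst).sub measurable_snd))).aestronglyMeasurable
      filter_upwards with p
      show ‖((sgn' (f x + p.1 - p.2) : ℝ) : ℂ)‖ ≤ 1
      rw [Complex.norm_real, Real.norm_eq_abs, abs_sgn']
    rw [integral_prod _ hint]
    have hz1 : ∀ᵐ z ∂μZ, (∫ t, ((sgn' (f x + z - t) : ℝ) : ℂ) ∂(threshLaw c))
        = (((f x + z)/c : ℝ) : ℂ) := by
      filter_upwards [hae_z] with z hz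
      have hs : f x + z ∈ Set.Icc (-c) c := by
        constructor
        · have := (hfbd x hx).1; have := hz.1; rw [hc]; linarith
        · have := (hfbd x hx).2; have := hz.2; rw [hc]; linarith
      rw [show (∫ t, ((sgn' (f x + z - t) : ℝ) : ℂ) ∂(threshLaw c))
          = ((∫ t, sgn' (f x + z - t) ∂(threshLaw c) : ℝ) : ℂ) from integral_ofReal,
        sgn'_integral hc0 hs]
    have hval : (∫ z, (f x + z)/c ∂μZ) = f x / c := by
      have h1 : (∫ z, (f x + z)/c ∂μZ) = (∫ z, (f x + z) ∂μZ) / c := by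
        rw [integral_div]
      rw [h1, integral_add (integrable_const _) hzint, integral_const, hZmean]
      simp
    rw [integral_congr_ae hz1, show (∫ z, (((f x + z)/c : ℝ) : ℂ) ∂μZ)
        = ((∫ z, (f x + z)/c ∂μZ : ℝ) : ℂ) from integral_ofReal, hval]
  have hgmean : ∀ j, (∫ w, g j w ∂μ) = coeff D f φ j := by
    intro j
    have hsplit : (∫ w, g j w ∂μ)
        = ∫ x, ∫ p : ℝ × ℝ, g j (x, p) ∂(μZ.prod (threshLaw c)) ∂(deployLaw D pX) := by
      rw [hμdef] at hgInt ⊢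
      exact integral_prod _ (hgInt j)
    have hpt : ∀ x, (∫ p : ℝ × ℝ, g j (x, p) ∂(μZ.prod (threshLaw c)))
        = G j x * ∫ p : ℝ × ℝ, ((sgn' (f x + p.1 - p.2) : ℝ) : ℂ) ∂(μZ.prod (threshLaw c)) := by
      intro x
      rw [← integral_const_mul]
    have hae1 : (fun x => ∫ p : ℝ × ℝ, g j (x, p) ∂(μZ.prod (threshLaw c)))
        =ᵐ[deployLaw D pX] (fun x => G j x * ((f x / c : ℝ) : ℂ)) := by
      filter_upwards [deploy_ae_mem hDm] with x hx
      rw [hpt x, hinner x hx]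
    rw [hsplit, integral_congr_ae hae1, deploy_integral hDm hpXpos hpXmeas, coeff]
    apply integral_congr_ae
    filter_upwards [ae_restrict_mem hDm] with x hx
    have hp := hpXpos x hx
    rw [hGdef]
    simp only [smul_eq_mul]
    rw [show ((pX x : ℝ)) • ((c:ℂ) * ((starRingEnd ℂ) (φ j x) / (pX x : ℂ)) * ((f x / c : ℝ) : ℂ))
        = (pX x : ℂ) * ((c:ℂ) * ((starRingEnd ℂ) (φ j x) / (pX x : ℂ)) * ((f x / c : ℝ) : ℂ))
      from by rw [Complex.real_smul]]
    have hpc : (pX x : ℂ) ≠ 0 := by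
      simp only [ne_eq, Complex.ofReal_eq_zero]
      exact ne_of_gt hp
    have hcc : (c : ℂ) ≠ 0 := by
      simp only [ne_eq, Complex.ofReal_eq_zero]
      exact ne_of_gt hc0
    push_cast
    field_simp
  -- transfer to P
  have hYL2 : ∀ i j, MemLp (fun ω => g j (W i ω)) 2 P := by
    intro i j
    have h1 : MemLp (g j) 2 (Measure.map (W i) P) := by rw [hmap i]; exact hgL2 j
    exact (memLp_map_measure_iff ((hgm j).aestronglyMeasurable) (hWmeas i).aemeasurable).mp h1
  have hYInt : ∀ i j, Integrable (fun ω => g j (W i ω)) P := fun i j =>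
    memLp_two_integrable (hYL2 i j)
  have hYmean : ∀ i j, (∫ ω, g j (W i ω) ∂P) = coeff D f φ j := by
    intro i j
    rw [← hgmean j, ← integral_map (hWmeas i).aemeasurable]
    · rw [hmap i]
    · rw [hmap i]; exact (hgm j).aestronglyMeasurable
  have hYsq : ∀ i j, (∫ ω, ‖g j (W i ω)‖^2 ∂P) ≤ c^2 * I j := by
    intro i j
    have : (∫ ω, ‖g j (W i ω)‖^2 ∂P) = ∫ w, ‖g j w‖^2 ∂μ := by
      rw [← hmap i, integral_map (hWmeas i).aemeasurable]
      rw [hmap i]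
      exact ((hgm j).norm.pow_const 2).aestronglyMeasurable
    rw [this]; exact hgsq j
  -- alphaHat as empirical mean of g j ∘ W i
  have halpha : ∀ n j ω, alphaHat c pX φ f X Z T n j ω
      = ((n:ℂ))⁻¹ * ∑ i ∈ Finset.range n, g j (W i ω) := by
    intro n j ω
    rw [alphaHat, hgdef, Finset.mul_sum, Finset.mul_sum]
    apply Finset.sum_congr rfl
    intro i _
    show (c:ℂ)/(n:ℂ) * _ = (n:ℂ)⁻¹ * _
    rw [obsB, hWdef]
    push_cast
    ring
  -- variance bound
  have hvar : ∀ n j, 1 ≤ n →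
      (∫ ω, ‖alphaHat c pX φ f X Z T n j ω - coeff D f φ j‖^2 ∂P) ≤ c^2 * I j / n := by
    intro n j hn
    set α : ℂ := coeff D f φ j with hα
    set A : ℕ → Ω → ℂ := fun i ω => g j (W i ω) - α with hA
    have hAL2 : ∀ i, MemLp (A i) 2 P := fun i => (hYL2 i j).sub (memLp_const α)
    have hAint : ∀ i, Integrable (A i) P := fun i => memLp_two_integrable (hAL2 i)
    have hAmean : ∀ i, (∫ ω, A i ω ∂P) = 0 := by
      intro i
      rw [hA]
      rw [integral_sub (hYInt i j) (integrable_const _), hYmean i j, integral_const]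
      simp [hα]
    have hAsq : ∀ i, (∫ ω, ‖A i ω‖^2 ∂P) ≤ c^2 * I j := by
      intro i
      have e : ∀ ω, ‖A i ω‖^2
          = ‖g j (W i ω)‖^2 - 2*((g j (W i ω)) * (starRingEnd ℂ) α).re + ‖α‖^2 :=
        fun ω => norm_sub_sq_complex _ _
      have hsq_int : Integrable (fun ω => ‖g j (W i ω)‖^2) P :=
        (memLp_two_iff_integrable_sq_norm (hYL2 i j).1).mp (hYL2 i j)
      have hYc : Integrable (fun ω => ((g j (W i ω)) * (starRingEnd ℂ) α).re) P := by
        have := ((hYInt i j).mul_const ((starRingEnd ℂ) α)).re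
        simpa using this
      have hre := integral_re ((hYInt i j).mul_const ((starRingEnd ℂ) α))
      simp only [RCLike.re_to_complex] at hre
      have hsub : Integrable
          (fun ω => ‖g j (W i ω)‖^2 - 2*((g j (W i ω)) * (starRingEnd ℂ) α).re) P :=
        hsq_int.sub (hYc.const_mul 2)
      rw [integral_congr_ae (Filter.Eventually.of_forall e), integral_add hsub
        (integrable_const _), integral_sub hsq_int (hYc.const_mul 2), integral_const_mul,
        hre, integral_mul_const, hYmean i j, integral_const]
      have hαre : (α * (starRingEnd ℂ) α).re = ‖α‖^2 := by
        rw [Complex.mul_conj]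
        simp [Complex.sq_norm]
      rw [← hα, hαre]
      simp only [probReal_univ, smul_eq_mul, one_mul]
      have h0 : (0:ℝ) ≤ ‖α‖^2 := by positivity
      linarith [hYsq i j]
    have hterm_int : ∀ i k, Integrable
        (fun ω => (A i ω * (starRingEnd ℂ) (A k ω)).re) P := by
      intro i k
      have := (integrable_mul_L2 (hAL2 i) (memLp_conj (hAL2 k))).re
      simpa using this
    have hcross : ∀ i k, i ≠ k → (∫ ω, (A i ω * (starRingEnd ℂ) (A k ω)).re ∂P) = 0 := by
      intro i k hik
      have hmeasA : Measurable (fun w : (Fin d → ℝ) × ℝ × ℝ => g j w - α) :=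
        (hgm j).sub measurable_const
      have hindep : IndepFun (A i) (A k) P := by
        have h1 := (hiid.indepFun hik).comp hmeasA hmeasA
        exact h1
      have hre : ∀ ω, (A i ω * (starRingEnd ℂ) (A k ω)).re
          = (A i ω).re * (A k ω).re + (A i ω).im * (A k ω).im := by
        intro ω
        simp only [Complex.mul_re, Complex.conj_re, Complex.conj_im]
        ring
      have hire : ∀ l, Integrable (fun ω => (A l ω).re) P := by
        intro l
        have := (hAint l).re
        simpa using this
      have hiim : ∀ l, Integrable (fun ω => (A l ω).im) P := by
        intro l
        have := (hAint l).im
        simpa using this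
      have hint_rere : Integrable (fun ω => (A i ω).re * (A k ω).re) P :=
        (hindep.comp Complex.measurable_re Complex.measurable_re).integrable_mul
          (hire i) (hire k)
      have hint_imim : Integrable (fun ω => (A i ω).im * (A k ω).im) P :=
        (hindep.comp Complex.measurable_im Complex.measurable_im).integrable_mul
          (hiim i) (hiim k)
      have hzre : ∀ l, (∫ ω, (A l ω).re ∂P) = 0 := by
        intro l
        have h1 := integral_re (hAint l)
        simp only [RCLike.re_to_complex] at h1
        rw [h1, hAmean l]
        simp
      have hzim : ∀ l, (∫ ω, (A l ω).im ∂P) = 0 := by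
        intro l
        have h1 := integral_im (hAint l)
        simp only [RCLike.im_to_complex] at h1
        rw [h1, hAmean l]
        simp
      have e1 : (∫ ω, (A i ω).re * (A k ω).re ∂P)
          = (∫ ω, (A i ω).re ∂P) * ∫ ω, (A k ω).re ∂P := by
        have h := (hindep.comp Complex.measurable_re
          Complex.measurable_re).integral_mul_eq_mul_integral (hire i).1 (hire k).1
        simpa using h
      have e2 : (∫ ω, (A i ω).im * (A k ω).im ∂P)
          = (∫ ω, (A i ω).im ∂P) * ∫ ω, (A k ω).im ∂P := by
        have h := (hindep.comp Complex.measurable_im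
          Complex.measurable_im).integral_mul_eq_mul_integral (hiim i).1 (hiim k).1
        simpa using h
      rw [integral_congr_ae (Filter.Eventually.of_forall hre),
        integral_add hint_rere hint_imim, e1, e2, hzre i, hzre k, hzim i]
      simp
    have hncC : (n:ℂ) ≠ 0 := Nat.cast_ne_zero.mpr (by omega)
    have hdecomp : ∀ ω, ‖alphaHat c pX φ f X Z T n j ω - α‖^2
        = ((n:ℝ)^2)⁻¹ * ∑ i ∈ Finset.range n, ∑ k ∈ Finset.range n,
            (A i ω * (starRingEnd ℂ) (A k ω)).re := by
      intro ω
      have h1 : alphaHat c pX φ f X Z T n j ω - α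
          = (n:ℂ)⁻¹ * ∑ i ∈ Finset.range n, A i ω := by
        rw [halpha n j ω, hA]
        rw [Finset.sum_sub_distrib, Finset.sum_const, Finset.card_range, mul_sub]
        rw [nsmul_eq_mul, ← mul_assoc, inv_mul_cancel₀ hncC, one_mul]
      rw [h1]
      set S : ℂ := ∑ i ∈ Finset.range n, A i ω with hS
      have h2 : ‖(n:ℂ)⁻¹ * S‖^2 = ((n:ℝ)^2)⁻¹ * ‖S‖^2 := by
        rw [norm_mul, norm_inv, Complex.norm_natCast, mul_pow, inv_pow]
      have h3 : ‖S‖^2 = (S * (starRingEnd ℂ) S).re := by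
        rw [Complex.mul_conj]
        simp [Complex.sq_norm]
      have h4 : S * (starRingEnd ℂ) S = ∑ i ∈ Finset.range n, ∑ k ∈ Finset.range n,
          A i ω * (starRingEnd ℂ) (A k ω) := by
        rw [hS, map_sum, Finset.sum_mul_sum]
      rw [h2, h3, h4, Complex.re_sum]
      congr 1
      exact Finset.sum_congr rfl fun i _ => by rw [Complex.re_sum]
    calc (∫ ω, ‖alphaHat c pX φ f X Z T n j ω - α‖^2 ∂P)
        = ((n:ℝ)^2)⁻¹ * ∑ i ∈ Finset.range n, ∑ k ∈ Finset.range n,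
            ∫ ω, (A i ω * (starRingEnd ℂ) (A k ω)).re ∂P := by
          rw [integral_congr_ae (Filter.Eventually.of_forall hdecomp), integral_const_mul,
            integral_finset_sum _ (fun i _ => integrable_finset_sum _
              (fun k _ => hterm_int i k))]
          congr 1
          exact Finset.sum_congr rfl fun i _ => integral_finset_sum _
            (fun k _ => hterm_int i k)
      _ ≤ ((n:ℝ)^2)⁻¹ * ∑ i ∈ Finset.range n, (c^2 * I j) := by
          apply mul_le_mul_of_nonneg_left _ (by positivity)
          apply Finset.sum_le_sum
          intro i hi
          rw [Finset.sum_eq_single i (fun k _ hki => hcross i k (Ne.symm hki))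
            (fun h => absurd hi h)]
          have : (∫ ω, (A i ω * (starRingEnd ℂ) (A i ω)).re ∂P) = ∫ ω, ‖A i ω‖^2 ∂P := by
            apply integral_congr_ae
            filter_upwards with ω
            rw [Complex.mul_conj]
            simp [Complex.sq_norm]
          rw [this]
          exact hAsq i
      _ ≤ c^2 * I j / n := by
          rw [Finset.sum_const, Finset.card_range, nsmul_eq_mul]
          have hnpos : (0:ℝ) < n := by exact_mod_cast hn
          rw [show ((n:ℝ)^2)⁻¹ * ((n:ℝ) * (c^2 * I j)) = c^2 * I j / n
            from by field_simp]
  -- δ is L²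
  have hδL2 : ∀ n j, MemLp (fun ω => alphaHat c pX φ f X Z T n j ω - coeff D f φ j) 2 P := by
    intro n j
    rw [show (fun ω => alphaHat c pX φ f X Z T n j ω - coeff D f φ j)
        = (fun ω => ((n:ℂ))⁻¹ * ∑ i ∈ Finset.range n, g j (W i ω) - coeff D f φ j)
      from funext fun ω => by rw [halpha]]
    apply MemLp.sub _ (memLp_const _)
    apply MemLp.const_mul
    have h := memLp_finset_sum' (μ := P) (Finset.range n)
      (fun i (_ : i ∈ Finset.range n) => hYL2 i j)
    have h3 : (∑ i ∈ Finset.range n, fun ω => g j (W i ω))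
        = fun ω => ∑ i ∈ Finset.range n, g j (W i ω) := by
      funext ω; simp
    rwa [h3] at h
  -- f is L² on D
  have hfL2 : MemLp (fun x => (f x : ℂ)) 2 (volume.restrict D) := by
    apply MemLp.of_bound (Complex.measurable_ofReal.comp hfmeas).aestronglyMeasurable a
    filter_upwards [ae_restrict_mem hDm] with x hx
    show ‖((f x : ℝ) : ℂ)‖ ≤ a
    rw [Complex.norm_real, Real.norm_eq_abs, abs_le]
    exact ⟨(hfbd x hx).1, (hfbd x hx).2⟩
  -- Parseval for f
  have hPars : (∑' j : ℕ, ‖coeff D f φ j‖ ^ 2) = ∫ x in D, ‖(f x : ℂ)‖ ^ 2 :=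
    hComplete _ (Complex.measurable_ofReal.comp hfmeas) hfL2
  have hsummable : Summable (fun j => ‖coeff D f φ j‖ ^ 2) := by
    by_contra h
    rw [tsum_eq_zero_of_not_summable h] at hPars
    have hint : Integrable (fun x => ‖(f x:ℂ)‖^2) (volume.restrict D) :=
      (memLp_two_iff_integrable_sq_norm hfL2.1).mp hfL2
    have hz := (integral_eq_zero_iff_of_nonneg (fun x => by positivity) hint).mp hPars.symm
    have hfz : (fun x => (f x : ℂ)) =ᵐ[volume.restrict D] 0 := by
      filter_upwards [hz] with x hx
      have : ‖(f x : ℂ)‖^2 = 0 := hx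
      show (f x : ℂ) = (0 : (Fin d → ℝ) → ℂ) x
      simp only [Pi.zero_apply]
      simpa [pow_eq_zero_iff, norm_eq_zero] using this
    have hcz : ∀ j, coeff D f φ j = 0 := by
      intro j
      rw [coeff]
      rw [integral_eq_zero_of_ae]
      filter_upwards [hfz] with x hx
      simp only [Pi.zero_apply] at hx
      simp [hx]
    apply h
    have : (fun j => ‖coeff D f φ j‖ ^ 2) = fun _ => (0:ℝ) := by
      funext j; rw [hcz j]; simp
    rw [this]
    exact summable_zero
  -- the exact decomposition of the MSE
  have hident : ∀ n m, intMSE P D c pX φ f X Z T n m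
      = tailErr D f φ m + ∑ j ∈ Finset.range m,
          ∫ ω, ‖alphaHat c pX φ f X Z T n j ω - coeff D f φ j‖^2 ∂P := by
    intro n m
    have htailm : (∫ x in D, ‖(f x:ℂ)‖^2) - (∑ j ∈ Finset.range m, ‖coeff D f φ j‖^2)
        = tailErr D f φ m := by
      have h1 := Summable.sum_add_tsum_nat_add m hsummable
      have h2 : (∑' j, ‖coeff D f φ (m + j)‖^2) = ∑' j, ‖coeff D f φ (j + m)‖^2 :=
        tsum_congr fun j => by rw [add_comm]
      rw [tailErr, ← hPars, h2]
      linarith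
    have hβ : ∀ ω, (∫ x in D, ‖(f x:ℂ) - fieldEst c pX φ f X Z T n m x ω‖^2)
        = tailErr D f φ m
          + ∑ j ∈ Finset.range m, ‖alphaHat c pX φ f X Z T n j ω - coeff D f φ j‖^2 := by
      intro ω
      have := expansion_lemma hfL2 hφL2 (fun j k => hON j k)
        (fun j => alphaHat c pX φ f X Z T n j ω) m
      rw [← htailm]
      exact this
    have hδint : ∀ j, Integrable
        (fun ω => ‖alphaHat c pX φ f X Z T n j ω - coeff D f φ j‖^2) P :=
      fun j => (memLp_two_iff_integrable_sq_norm (hδL2 n j).1).mp (hδL2 n j)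
    rw [intMSE, integral_congr_ae (Filter.Eventually.of_forall hβ), integral_add
      (integrable_const _) (integrable_finset_sum _ (fun j _ => hδint j)),
      integral_const, integral_finset_sum _ (fun j _ => hδint j)]
    simp
  -- tail goes to zero
  have htail : Tendsto (fun n => tailErr D f φ (mfun n)) atTop (𝓝 0) := by
    have h0 : Tendsto (fun m => tailErr D f φ m) atTop (𝓝 0) := by
      have := tendsto_sum_nat_add (fun j => ‖coeff D f φ j‖ ^ 2)
      apply this.congr
      intro m
      rw [tailErr]
      exact tsum_congr fun j => by rw [add_comm]
    exact h0.comp hm1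
  -- squeeze
  have hub : ∀ᶠ n in atTop, intMSE P D c pX φ f X Z T n (mfun n)
      ≤ tailErr D f φ (mfun n) + c^2 * ((1/(n:ℝ)) * ∑ j ∈ Finset.range (mfun n), I j) := by
    filter_upwards [eventually_ge_atTop 1] with n hn
    rw [hident n (mfun n)]
    gcongr
    calc (∑ j ∈ Finset.range (mfun n),
          ∫ ω, ‖alphaHat c pX φ f X Z T n j ω - coeff D f φ j‖^2 ∂P)
        ≤ ∑ j ∈ Finset.range (mfun n), c^2 * I j / n :=
          Finset.sum_le_sum fun j _ => hvar n j hn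
      _ = c^2 * ((1/(n:ℝ)) * ∑ j ∈ Finset.range (mfun n), I j) := by
          rw [Finset.mul_sum, Finset.mul_sum]
          exact Finset.sum_congr rfl fun j _ => by ring
  have hlb : ∀ᶠ n in atTop, 0 ≤ intMSE P D c pX φ f X Z T n (mfun n) := by
    filter_upwards with n
    apply integral_nonneg
    intro ω
    apply integral_nonneg
    intro x
    positivity
  have hlim : Tendsto (fun n => tailErr D f φ (mfun n)
      + c^2 * ((1/(n:ℝ)) * ∑ j ∈ Finset.range (mfun n), I j)) atTop (𝓝 0) := by
    have := htail.add ((hm2.const_mul (c^2)))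
    simpa using this
  exact squeeze_zero' hlb hub hlim
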